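/- Let F be a field, s_1,…,s_m ∈ F^n, P ⊆ {1,…,n}, and η ∈ {1,…,n}. Suppose there exists a function f : F^m × F^P → F such that for every x ∈ F^n, f(s_1·x, …, s_m·x, (x_j)_{j∈P}) = x_η. Then the standard basis vector e_η lies in the span of {s_1,…,s_m} ∪ {e_j : j ∈ P}. -/

import Mathlib

open Matrix

theorem single_mem_span_of_decodable {F : Type*} [Field F] {n m : ℕ}
    (s : Fin m → Fin n → F) (P : Set (Fin n)) (η : Fin n)
    (f : (Fin m → F) → (P → F) → F)
    (hf : ∀ x : Fin n → F, f (fun i => s i ⬝ᵥ x) (fun j => x j) = x η) :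
    Pi.single η (1 : F) ∈
      Submodule.span F (Set.range s ∪ {v | ∃ j ∈ P, v = Pi.single j 1}) := by
  by_contra hmem
  obtain ⟨φ, hφx, hφbot⟩ :=
    Submodule.exists_dual_map_eq_bot_of_notMem hmem inferInstance
  have hker : ∀ v ∈ Submodule.span F
      (Set.range s ∪ {v | ∃ j ∈ P, v = Pi.single j 1}), φ v = 0 := by
    intro v hv
    have : φ v ∈ Submodule.map φ (Submodule.span F _) := Submodule.mem_map_of_mem hv
    rw [hφbot] at this
    simpa using this
  set y : Fin n → F := fun k => φ (Pi.single k 1) with hy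
  have hphi : ∀ x : Fin n → F, φ x = x ⬝ᵥ y := by
    intro x
    have hx : x = ∑ k, x k • (Pi.single k (1 : F) : Fin n → F) := by
      funext k; simp [Finset.sum_apply, Pi.single_apply]
    rw [hx]
    simp [map_sum, dotProduct, Finset.sum_apply, Pi.single_apply, mul_comm]
    rfl
  have hs : ∀ i, s i ⬝ᵥ y = 0 := by
    intro i
    rw [← hphi]
    exact hker _ (Submodule.subset_span (Or.inl ⟨i, rfl⟩))
  have hP : ∀ j : P, y (j : Fin n) = 0 := by
    intro j
    exact hker _ (Submodule.subset_span (Or.inr ⟨j, j.2, rfl⟩))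
  have h1 := hf y
  have h2 := hf 0
  have heq : f (fun i => s i ⬝ᵥ y) (fun j => y j) = f (fun i => s i ⬝ᵥ (0 : Fin n → F)) (fun j => (0 : Fin n → F) j) := by
    congr 1
    · funext i; simp [hs]
    · funext j; simp [hP j]
  rw [h1, h2] at heq
  have : y η ≠ 0 := by
    have : φ (Pi.single η 1) ≠ 0 := hφx
    simpa [hy] using this
  exact this (by simpa using heq)
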